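/- arXiv:1201.4141 — 5 statements merged into one kernel-verified Lean document; each statement's English description precedes it below -/
import Mathlib

section
/- Let ν¹ and ν² be real eigenvectors of B = Aᵀ corresponding to distinct real eigenvalues λ₁ ≠ λ₂, and let h₁, h₂ be real numbers, not both zero, with λ₁h₁ + λ₂h₂ = 0. Then the function F(x) = |ν¹·x|^{h₁} |ν²·x|^{h₂} is an autonomous first integral of the system dx/dt = Ax on any open set where ν¹·x ≠ 0 and ν²·x ≠ 0, i.e. (∇F(x))·(Ax) = 0 there. -/
open Matrix

lemma myDerivAbsRpow (h : ℝ) {t : ℝ} (ht : t ≠ 0) :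
    HasDerivAt (fun s : ℝ => |s| ^ h) (h * |t| ^ h / t) t := by
  rcases ht.lt_or_gt with hlt | hgt
  · have hne : -t ≠ 0 := neg_ne_zero.mpr ht
    have h1 : HasDerivAt (fun s : ℝ => (-s) ^ h) (h * (-t) ^ (h - 1) * (-1)) t := by
      have := (Real.hasDerivAt_rpow_const (x := -t) (p := h) (Or.inl hne))
      exact this.comp t (hasDerivAt_neg t)
    have heq : (fun s : ℝ => |s| ^ h) =ᶠ[nhds t] (fun s : ℝ => (-s) ^ h) := by
      filter_upwards [Iio_mem_nhds hlt] with s hs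
      rw [abs_of_neg hs]
    have h2 := h1.congr_of_eventuallyEq heq
    refine h2.congr_deriv ?_
    rw [abs_of_neg hlt, Real.rpow_sub_one hne]
    field_simp
  · have h1 : HasDerivAt (fun s : ℝ => s ^ h) (h * t ^ (h - 1)) t :=
      Real.hasDerivAt_rpow_const (Or.inl ht)
    have heq : (fun s : ℝ => |s| ^ h) =ᶠ[nhds t] (fun s : ℝ => s ^ h) := by
      filter_upwards [Ioi_mem_nhds hgt] with s hs
      rw [abs_of_pos hs]
    have h2 := h1.congr_of_eventuallyEq heq
    refine h2.congr_deriv ?_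
    rw [abs_of_pos hgt, Real.rpow_sub_one ht]
    field_simp

lemma hasFDerivAt_dotProduct (n : ℕ) (ν : Fin n → ℝ) (x : Fin n → ℝ) :
    HasFDerivAt (fun y : Fin n → ℝ => ν ⬝ᵥ y)
      (∑ i, ν i • ContinuousLinearMap.proj (R := ℝ) (φ := fun _ : Fin n => ℝ) i) x := by
  have : HasFDerivAt (fun y : Fin n → ℝ => ∑ i, ν i * y i)
      (∑ i, ν i • ContinuousLinearMap.proj (R := ℝ) (φ := fun _ : Fin n => ℝ) i) x := by
    apply HasFDerivAt.fun_sum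
    intro i _
    exact ((ContinuousLinearMap.proj (R := ℝ) (φ := fun _ : Fin n => ℝ) i).hasFDerivAt
      (x := x)).const_smul (ν i)
  simpa [dotProduct] using this

/-- Theorem 1.1: if `ν¹, ν²` are real eigenvectors of `Aᵀ` with distinct eigenvalues
`λ₁ ≠ λ₂` and `λ₁h₁ + λ₂h₂ = 0` with `(h₁,h₂) ≠ (0,0)`, then
`F(x) = |ν¹·x|^{h₁}|ν²·x|^{h₂}` is an autonomous first integral of `dx/dt = Ax`
wherever `ν¹·x ≠ 0` and `ν²·x ≠ 0`. -/
theorem first_integral_two_real_eigenvectors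
    (n : ℕ) (A : Matrix (Fin n) (Fin n) ℝ)
    (ν₁ ν₂ : Fin n → ℝ) (hν₁ : ν₁ ≠ 0) (hν₂ : ν₂ ≠ 0)
    (lam₁ lam₂ : ℝ) (hlam : lam₁ ≠ lam₂)
    (heig₁ : Aᵀ.mulVec ν₁ = lam₁ • ν₁) (heig₂ : Aᵀ.mulVec ν₂ = lam₂ • ν₂)
    (h₁ h₂ : ℝ) (hh : ¬(h₁ = 0 ∧ h₂ = 0)) (hsol : lam₁ * h₁ + lam₂ * h₂ = 0) :
    ∀ x : Fin n → ℝ, ν₁ ⬝ᵥ x ≠ 0 → ν₂ ⬝ᵥ x ≠ 0 →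
      fderiv ℝ (fun y => |ν₁ ⬝ᵥ y| ^ h₁ * |ν₂ ⬝ᵥ y| ^ h₂) x (A.mulVec x) = 0 := by
  intro x ha hb
  set a := ν₁ ⬝ᵥ x with ha_def
  set b := ν₂ ⬝ᵥ x with hb_def
  set L₁ := ∑ i, ν₁ i • ContinuousLinearMap.proj (R := ℝ) (φ := fun _ : Fin n => ℝ) i with hL₁
  set L₂ := ∑ i, ν₂ i • ContinuousLinearMap.proj (R := ℝ) (φ := fun _ : Fin n => ℝ) i with hL₂
  have hLap : ∀ (ν : Fin n → ℝ) (v : Fin n → ℝ),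
      (∑ i, ν i • ContinuousLinearMap.proj (R := ℝ) (φ := fun _ : Fin n => ℝ) i) v
        = ν ⬝ᵥ v := by
    intro ν v
    simp [dotProduct, ContinuousLinearMap.sum_apply]
  have hF₁ : HasFDerivAt (fun y : Fin n → ℝ => |ν₁ ⬝ᵥ y| ^ h₁)
      ((h₁ * |a| ^ h₁ / a) • L₁) x :=
    (myDerivAbsRpow h₁ ha).comp_hasFDerivAt (h₂ := fun s : ℝ => |s| ^ h₁) x (hasFDerivAt_dotProduct n ν₁ x)
  have hF₂ : HasFDerivAt (fun y : Fin n → ℝ => |ν₂ ⬝ᵥ y| ^ h₂)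
      ((h₂ * |b| ^ h₂ / b) • L₂) x :=
    (myDerivAbsRpow h₂ hb).comp_hasFDerivAt (h₂ := fun s : ℝ => |s| ^ h₂) x (hasFDerivAt_dotProduct n ν₂ x)
  have hF := hF₁.mul hF₂
  rw [HasFDerivAt.fderiv (f := fun y => |ν₁ ⬝ᵥ y| ^ h₁ * |ν₂ ⬝ᵥ y| ^ h₂) hF]
  have hAx₁ : ν₁ ⬝ᵥ A.mulVec x = lam₁ * a := by
    rw [dotProduct_mulVec, ← mulVec_transpose, heig₁, smul_dotProduct, smul_eq_mul]
  have hAx₂ : ν₂ ⬝ᵥ A.mulVec x = lam₂ * b := by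
    rw [dotProduct_mulVec, ← mulVec_transpose, heig₂, smul_dotProduct, smul_eq_mul]
  simp only [ContinuousLinearMap.add_apply, ContinuousLinearMap.smul_apply,
    ContinuousLinearMap.coe_smul', Pi.smul_apply, hL₁, hL₂, hLap, hAx₁, hAx₂, smul_eq_mul]
  field_simp
  linear_combination (|ν₁ ⬝ᵥ x| ^ h₁ * |b| ^ h₂) * hsol
end

section
/- For polynomials u₁, u₂: ℝⁿ → ℝ, the product u₁u₂ is a polynomial partial integral of the system dx/dt = Ax (i.e. 𝔄(u₁u₂) is divisible by u₁u₂) if and only if u₁ and u₂ are each polynomial partial integrals (i.e. 𝔄u₁ is divisible by u₁ and 𝔄u₂ is divisible by u₂). -/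
open Matrix MvPolynomial

noncomputable def polyLieDeriv {n : ℕ} (A : Matrix (Fin n) (Fin n) ℝ)
    (u : MvPolynomial (Fin n) ℝ) : MvPolynomial (Fin n) ℝ :=
  ∑ i, (∑ j, C (A i j) * X j) * pderiv i u

lemma polyLieDeriv_mul {n : ℕ} (A : Matrix (Fin n) (Fin n) ℝ)
    (u v : MvPolynomial (Fin n) ℝ) :
    polyLieDeriv A (u * v) = polyLieDeriv A u * v + u * polyLieDeriv A v := by
  unfold polyLieDeriv
  rw [Finset.sum_mul, Finset.mul_sum, ← Finset.sum_add_distrib]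
  refine Finset.sum_congr rfl fun i _ => ?_
  rw [pderiv_mul]
  ring

lemma polyLieDeriv_pow {n : ℕ} (A : Matrix (Fin n) (Fin n) ℝ)
    (u : MvPolynomial (Fin n) ℝ) (k : ℕ) :
    polyLieDeriv A (u ^ k) = (k : MvPolynomial (Fin n) ℝ) * u ^ (k - 1) * polyLieDeriv A u := by
  unfold polyLieDeriv
  rw [Finset.mul_sum]
  refine Finset.sum_congr rfl fun i _ => ?_
  rw [pderiv_pow]
  ring

lemma prime_dvd_lieDeriv {n : ℕ} (A : Matrix (Fin n) (Fin n) ℝ)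
    {w p : MvPolynomial (Fin n) ℝ} (hw : w ≠ 0)
    (hdvd : w ∣ polyLieDeriv A w) (hp : Prime p) (hpw : p ∣ w) :
    p ∣ polyLieDeriv A p := by
  obtain ⟨k, s, hps, rfl⟩ := WfDvdMonoid.max_power_factor hw hp.irreducible
  have hk : k ≠ 0 := by
    rintro rfl
    simp only [pow_zero, one_mul] at hpw
    exact hps hpw
  have h1 : p ^ k ∣ polyLieDeriv A (p ^ k * s) :=
    (dvd_mul_right _ s).trans hdvd
  rw [polyLieDeriv_mul, polyLieDeriv_pow] at h1
  have h2 : p ^ k ∣ (k : MvPolynomial (Fin n) ℝ) * p ^ (k - 1) * polyLieDeriv A p * s :=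
    (dvd_add_left (Dvd.intro _ rfl)).mp h1
  have hrw : (k : MvPolynomial (Fin n) ℝ) * p ^ (k - 1) * polyLieDeriv A p * s
      = p ^ (k - 1) * ((k : MvPolynomial (Fin n) ℝ) * polyLieDeriv A p * s) := by ring
  have hpk : p ^ k = p ^ (k - 1) * p := by
    conv_lhs => rw [← Nat.succ_pred_eq_of_ne_zero hk]
    rw [pow_succ]
    rfl
  rw [hrw, hpk] at h2
  have hpne : p ^ (k - 1) ≠ 0 := pow_ne_zero _ hp.ne_zero
  have h3 : p ∣ (k : MvPolynomial (Fin n) ℝ) * polyLieDeriv A p * s :=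
    (mul_dvd_mul_iff_left hpne).mp h2
  have hku : IsUnit (k : MvPolynomial (Fin n) ℝ) := by
    rw [show ((k : MvPolynomial (Fin n) ℝ)) = C (k : ℝ) by simp]
    exact (isUnit_iff_ne_zero.mpr (by exact_mod_cast hk : (k : ℝ) ≠ 0)).map C
  have h4 : p ∣ polyLieDeriv A p * s :=
    (hp.dvd_mul.mp (by rwa [mul_assoc] at h3)).resolve_left
      (fun h => hp.not_unit (isUnit_of_dvd_unit h hku))
  exact (hp.dvd_mul.mp h4).resolve_right hps

lemma left_dvd_lieDeriv {n : ℕ} (A : Matrix (Fin n) (Fin n) ℝ) :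
    ∀ u : MvPolynomial (Fin n) ℝ, u ≠ 0 → ∀ v : MvPolynomial (Fin n) ℝ, v ≠ 0 →
      (u * v ∣ polyLieDeriv A (u * v)) → u ∣ polyLieDeriv A u := by
  intro u
  induction u using UniqueFactorizationMonoid.induction_on_prime with
  | h₁ => intro h; exact absurd rfl h
  | h₂ x hx => intro _ v _ _; exact hx.dvd
  | h₃ a p ha hp ih =>
    intro hpa v hv hdvd
    have hDa : a ∣ polyLieDeriv A a := by
      refine ih ha (p * v) (mul_ne_zero hp.ne_zero hv) ?_
      have h : a * (p * v) = p * a * v := by ring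
      rw [h]; exact hdvd
    have hDp : p ∣ polyLieDeriv A p :=
      prime_dvd_lieDeriv A (mul_ne_zero (mul_ne_zero hp.ne_zero ha) hv) hdvd hp
        ⟨a * v, by ring⟩
    rw [polyLieDeriv_mul]
    exact dvd_add (mul_dvd_mul hDp dvd_rfl) (mul_dvd_mul dvd_rfl hDa)

/-- Property 1.3: the product `u₁u₂` of nonzero polynomials is a polynomial
partial integral of `dx/dt = Ax` (i.e. `u₁u₂ ∣ 𝔄(u₁u₂)`) iff `u₁` and `u₂` are
each polynomial partial integrals. -/
theorem product_partial_integral_iff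
    (n : ℕ) (A : Matrix (Fin n) (Fin n) ℝ)
    (u₁ u₂ : MvPolynomial (Fin n) ℝ) (h₁ : u₁ ≠ 0) (h₂ : u₂ ≠ 0) :
    (u₁ * u₂ ∣ polyLieDeriv A (u₁ * u₂)) ↔
      ((u₁ ∣ polyLieDeriv A u₁) ∧ (u₂ ∣ polyLieDeriv A u₂)) := by
  constructor
  · intro h
    refine ⟨left_dvd_lieDeriv A u₁ h₁ u₂ h₂ h, left_dvd_lieDeriv A u₂ h₂ u₁ h₁ ?_⟩
    rwa [mul_comm]
  · rintro ⟨d1, d2⟩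
    rw [polyLieDeriv_mul]
    exact dvd_add (mul_dvd_mul d1 dvd_rfl) (mul_dvd_mul dvd_rfl d2)
end

section
/- Let ν = ν* + iν̃ be a complex eigenvector of B = Aᵀ with eigenvalue λ = λ* + iλ̃. Then the function φ(x) = arctan((ν̃·x)/(ν*·x)) satisfies 𝔄φ(x) = λ̃ for all x in any open set where ν*·x ≠ 0. -/
open Matrix

noncomputable def dotCLM {n : ℕ} (v : Fin n → ℝ) : (Fin n → ℝ) →L[ℝ] ℝ :=
  ∑ i : Fin n, v i • ContinuousLinearMap.proj i

lemma dotCLM_apply {n : ℕ} (v h : Fin n → ℝ) : dotCLM v h = v ⬝ᵥ h := by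
  simp [dotCLM, dotProduct, ContinuousLinearMap.sum_apply]

lemma hasFDerivAt_dot {n : ℕ} (v x : Fin n → ℝ) :
    HasFDerivAt (fun y => v ⬝ᵥ y) (dotCLM v) x := by
  have : (fun y : Fin n → ℝ => v ⬝ᵥ y) = ⇑(dotCLM v) := by
    funext y; rw [dotCLM_apply]
  rw [this]
  exact (dotCLM v).hasFDerivAt

/-- Property 1.5: if `ν = ν* + iν̃` is a complex eigenvector of `B = Aᵀ` with
eigenvalue `λ = λ* + iλ̃`, then `φ(x) = arctan((ν̃·x)/(ν*·x))` satisfies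
`𝔄φ(x) = λ̃` wherever `ν*·x ≠ 0`. -/
theorem arctan_lie_derivative
    (n : ℕ) (A : Matrix (Fin n) (Fin n) ℝ)
    (νs νt : Fin n → ℝ) (lams lamt : ℝ)
    (hν : (fun i => (νs i : ℂ) + νt i * Complex.I) ≠ (0 : Fin n → ℂ))
    (heig : (A.map Complex.ofReal)ᵀ.mulVec (fun i => (νs i : ℂ) + νt i * Complex.I)
      = ((lams : ℂ) + lamt * Complex.I) • (fun i => (νs i : ℂ) + νt i * Complex.I)) :
    ∀ x : Fin n → ℝ, νs ⬝ᵥ x ≠ 0 →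
      fderiv ℝ (fun y => Real.arctan ((νt ⬝ᵥ y) / (νs ⬝ᵥ y))) x (A.mulVec x) = lamt := by
  -- extract real and imaginary parts of the eigenvalue equation
  have hs : ∀ i, Aᵀ.mulVec νs i = lams * νs i - lamt * νt i := by
    intro i
    have h := congrArg Complex.re (congrFun heig i)
    simpa [Matrix.mulVec, dotProduct, Complex.ext_iff, Complex.mul_re,
      Complex.add_re, Complex.re_sum, Complex.mul_im, mul_comm] using h
  have ht : ∀ i, Aᵀ.mulVec νt i = lamt * νs i + lams * νt i := by
    intro i
    have h := congrArg Complex.im (congrFun heig i)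
    have h2 : ∑ j : Fin n, A j i * νt j = lams * νt i + lamt * νs i := by
      simpa [Matrix.mulVec, dotProduct, Complex.ext_iff, Complex.mul_re,
        Complex.add_im, Complex.im_sum, Complex.mul_im, mul_comm] using h
    simp only [Matrix.mulVec, dotProduct, Matrix.transpose_apply]
    rw [h2]
    ring
  intro x hx
  set s := νs ⬝ᵥ x with hsdef
  set t := νt ⬝ᵥ x with htdef
  -- dot products with A.mulVec x
  have hAs : νs ⬝ᵥ A.mulVec x = lams * s - lamt * t := by
    rw [Matrix.dotProduct_mulVec, ← Matrix.mulVec_transpose]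
    have : Aᵀ.mulVec νs = fun i => lams * νs i - lamt * νt i := funext hs
    rw [this]
    simp [dotProduct, hsdef, htdef, sub_mul, Finset.sum_sub_distrib,
      Finset.mul_sum, mul_assoc]
  have hAt : νt ⬝ᵥ A.mulVec x = lamt * s + lams * t := by
    rw [Matrix.dotProduct_mulVec, ← Matrix.mulVec_transpose]
    have : Aᵀ.mulVec νt = fun i => lamt * νs i + lams * νt i := funext ht
    rw [this]
    simp [dotProduct, hsdef, htdef, add_mul, Finset.sum_add_distrib,
      Finset.mul_sum, mul_assoc]
  -- derivative of the quotient
  have hu : HasFDerivAt (fun y => νt ⬝ᵥ y) (dotCLM νt) x := hasFDerivAt_dot νt x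
  have hv : HasFDerivAt (fun y => νs ⬝ᵥ y) (dotCLM νs) x := hasFDerivAt_dot νs x
  have hvinv : HasFDerivAt (fun y => (νs ⬝ᵥ y)⁻¹) ((-(s ^ 2)⁻¹) • dotCLM νs) x :=
    (hasDerivAt_inv hx).comp_hasFDerivAt x hv
  have hq : HasFDerivAt (fun y => (νt ⬝ᵥ y) / (νs ⬝ᵥ y))
      (t • ((-(s ^ 2)⁻¹) • dotCLM νs) + s⁻¹ • dotCLM νt) x := by
    have := hu.mul hvinv
    simpa [div_eq_mul_inv, Pi.mul_def, ← hsdef, ← htdef] using this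
  have hφ : HasFDerivAt (fun y => Real.arctan ((νt ⬝ᵥ y) / (νs ⬝ᵥ y)))
      ((1 / (1 + (t / s) ^ 2)) • (t • ((-(s ^ 2)⁻¹) • dotCLM νs) + s⁻¹ • dotCLM νt)) x :=
    by have := (Real.hasDerivAt_arctan (t / s)).comp_hasFDerivAt x hq; exact this
  rw [hφ.fderiv]
  simp only [ContinuousLinearMap.coe_smul', Pi.smul_apply, ContinuousLinearMap.add_apply,
    ContinuousLinearMap.smul_apply, smul_eq_mul, dotCLM_apply, hAs, hAt]
  have hst : 1 + (t / s) ^ 2 ≠ 0 := by positivity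
  field_simp
  ring
end

section
/- Let ν = ν* + iν̃ be a complex eigenvector of B = Aᵀ with eigenvalue λ = λ* + iλ̃ where λ̃ ≠ 0. Then F(x) = ((ν*·x)² + (ν̃·x)²) · exp(−(2λ*/λ̃) · arctan((ν̃·x)/(ν*·x))) is an autonomous first integral of dx/dt = Ax on any open set where ν*·x ≠ 0. -/
open Matrix

/-- Theorem 1.2: if `ν = ν* + iν̃` is a complex eigenvector of `B = Aᵀ` with
eigenvalue `λ = λ* + iλ̃`, `λ̃ ≠ 0`, then
`F(x) = ((ν*·x)² + (ν̃·x)²)·exp(−(2λ*/λ̃)·arctan((ν̃·x)/(ν*·x)))`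
is an autonomous first integral of `dx/dt = Ax` wherever `ν*·x ≠ 0`. -/
theorem first_integral_complex_eigenvector
    (n : ℕ) (A : Matrix (Fin n) (Fin n) ℝ)
    (νs νt : Fin n → ℝ) (lams lamt : ℝ) (hlamt : lamt ≠ 0)
    (hν : (fun i => (νs i : ℂ) + νt i * Complex.I) ≠ (0 : Fin n → ℂ))
    (heig : (A.map Complex.ofReal)ᵀ.mulVec (fun i => (νs i : ℂ) + νt i * Complex.I)
      = ((lams : ℂ) + lamt * Complex.I) • (fun i => (νs i : ℂ) + νt i * Complex.I)) :
    ∀ x : Fin n → ℝ, νs ⬝ᵥ x ≠ 0 →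
      fderiv ℝ (fun y => ((νs ⬝ᵥ y) ^ 2 + (νt ⬝ᵥ y) ^ 2)
          * Real.exp (-(2 * lams / lamt) * Real.arctan ((νt ⬝ᵥ y) / (νs ⬝ᵥ y))))
        x (A.mulVec x) = 0 := by
  intro x hx
  -- real and imaginary parts of the eigenvector equation
  have hri : ∀ i, (∑ j, A j i * νs j = lams * νs i - lamt * νt i)
      ∧ (∑ j, A j i * νt j = lams * νt i + lamt * νs i) := by
    intro i
    have := congrFun heig i
    simpa [Matrix.mulVec, dotProduct, Complex.ext_iff,
      Finset.sum_add_distrib] using this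
  set u : ℝ := νs ⬝ᵥ x with hu
  set w : ℝ := νt ⬝ᵥ x with hw
  -- dot products along the vector field
  have hAs : νs ⬝ᵥ A.mulVec x = lams * u - lamt * w := by
    rw [Matrix.dotProduct_mulVec]
    have : νs ᵥ* A = fun i => lams * νs i - lamt * νt i := by
      funext i
      simpa [Matrix.vecMul, dotProduct, mul_comm] using (hri i).1
    rw [this]
    simp [dotProduct, hu, hw, sub_mul, Finset.sum_sub_distrib,
      Finset.mul_sum, mul_assoc]
  have hAt : νt ⬝ᵥ A.mulVec x = lams * w + lamt * u := by
    rw [Matrix.dotProduct_mulVec]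
    have : νt ᵥ* A = fun i => lams * νt i + lamt * νs i := by
      funext i
      simpa [Matrix.vecMul, dotProduct, mul_comm] using (hri i).2
    rw [this]
    simp [dotProduct, hu, hw, add_mul, Finset.sum_add_distrib,
      Finset.mul_sum, mul_assoc]
  -- derivative of dot products
  have key : ∀ v : Fin n → ℝ, HasFDerivAt (fun y : Fin n → ℝ => v ⬝ᵥ y)
      (∑ i, v i • (ContinuousLinearMap.proj i : (Fin n → ℝ) →L[ℝ] ℝ)) x := by
    intro v
    have : (fun y : Fin n → ℝ => v ⬝ᵥ y) = fun y => ∑ i, v i * y i := rfl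
    rw [this]
    exact HasFDerivAt.fun_sum fun i _ =>
      ((ContinuousLinearMap.proj i : (Fin n → ℝ) →L[ℝ] ℝ).hasFDerivAt).const_mul (v i)
  have hLs := key νs
  have hLt := key νt
  set Ls := ∑ i, νs i • (ContinuousLinearMap.proj i : (Fin n → ℝ) →L[ℝ] ℝ)
  set Lt := ∑ i, νt i • (ContinuousLinearMap.proj i : (Fin n → ℝ) →L[ℝ] ℝ)
  have hLsv : ∀ v, Ls v = νs ⬝ᵥ v := by
    intro v; simp [Ls, dotProduct, ContinuousLinearMap.sum_apply]
  have hLtv : ∀ v, Lt v = νt ⬝ᵥ v := by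
    intro v; simp [Lt, dotProduct, ContinuousLinearMap.sum_apply]
  -- build the derivative
  have hQ : HasFDerivAt (fun y => (νs ⬝ᵥ y) ^ 2 + (νt ⬝ᵥ y) ^ 2)
      ((u • Ls + u • Ls) + (w • Lt + w • Lt)) x := by
    simp only [pow_two]
    exact (hLs.mul hLs).add (hLt.mul hLt)
  have hinv : HasFDerivAt (fun y => (νs ⬝ᵥ y)⁻¹) ((-(u ^ 2)⁻¹) • Ls) x :=
    (hasDerivAt_inv hx).comp_hasFDerivAt x hLs
  have hdiv : HasFDerivAt (fun y => (νt ⬝ᵥ y) / (νs ⬝ᵥ y))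
      (w • ((-(u ^ 2)⁻¹) • Ls) + u⁻¹ • Lt) x := by
    simp only [div_eq_mul_inv]
    exact hLt.mul hinv
  have harc := (Real.hasDerivAt_arctan (w / u)).comp_hasFDerivAt x hdiv
  have hcm := harc.const_mul (-(2 * lams / lamt))
  have hexp := hcm.exp
  have hF := hQ.fun_mul hexp
  simp only [Function.comp_def] at hF
  rw [hF.fderiv]
  have hne2 : 1 + (w / u) ^ 2 ≠ 0 := by positivity
  simp only [ContinuousLinearMap.add_apply, ContinuousLinearMap.smul_apply,
    hLsv, hLtv, hAs, hAt, smul_eq_mul]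
  field_simp
  ring
end

section
/- Let A: J → M_n(ℝ) be continuous on an interval J, let f: J → ℝⁿ be continuous, and suppose ν ∈ ℝⁿ and λ: J → ℝ continuous satisfy A(t)ᵀ ν = λ(t) ν for all t ∈ J. Fix t₀ ∈ J and set φ(t) = exp(−∫_{t₀}^t λ(ζ)dζ). Then F(t,x) = (ν·x)·φ(t) − ∫_{t₀}^t (ν·f(ζ))·φ(ζ) dζ is a first integral of the system dx/dt = A(t)x + f(t), i.e. ∂ₜF(t,x) + (∇ₓF(t,x))·(A(t)x + f(t)) = 0 for all (t,x) ∈ J × ℝⁿ. -/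
open Matrix

/-- Theorem 2.1: for the algebraic reducible system `dx/dt = A(t)x + f(t)` on an
interval `J`, with `ν` a constant real eigenvector of `A(t)ᵀ` with eigenfunction
`λ(t)`, the function
`F(t,x) = (ν·x)·φ(t) − ∫_{t₀}^t (ν·f(ζ))·φ(ζ)dζ`, `φ(t) = exp(−∫_{t₀}^t λ)`,
is a first integral: `∂ₜF + (∇ₓF)·(A(t)x + f(t)) = 0` on `J × ℝⁿ`. -/
theorem first_integral_algebraic_reducible
    (n : ℕ) (J : Set ℝ) (hJo : IsOpen J) (hJc : J.OrdConnected)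
    (A : ℝ → Matrix (Fin n) (Fin n) ℝ) (f : ℝ → Fin n → ℝ) (lam : ℝ → ℝ)
    (hA : ContinuousOn A J) (hf : ContinuousOn f J) (hlam : ContinuousOn lam J)
    (ν : Fin n → ℝ) (hν : ν ≠ 0)
    (heig : ∀ t ∈ J, (A t)ᵀ.mulVec ν = lam t • ν)
    (t₀ : ℝ) (ht₀ : t₀ ∈ J) :
    ∀ t ∈ J, ∀ x : Fin n → ℝ,
      deriv (fun s => (ν ⬝ᵥ x) * Real.exp (-∫ ζ in t₀..s, lam ζ)
          - ∫ ζ in t₀..s, (ν ⬝ᵥ f ζ) * Real.exp (-∫ θ in t₀..ζ, lam θ)) t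
        + fderiv ℝ (fun y => (ν ⬝ᵥ y) * Real.exp (-∫ ζ in t₀..t, lam ζ)
            - ∫ ζ in t₀..t, (ν ⬝ᵥ f ζ) * Real.exp (-∫ θ in t₀..ζ, lam θ)) x
            ((A t).mulVec x + f t) = 0 := by
  intro t ht x
  set G : ℝ → ℝ := fun s => ∫ ζ in t₀..s, lam ζ with hGdef
  -- derivative of G on J
  have hsub : ∀ s ∈ J, Set.uIcc t₀ s ⊆ J := fun s hs => hJc.uIcc_subset ht₀ hs
  have hGderiv : ∀ s ∈ J, HasDerivAt G (lam s) s := by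
    intro s hs
    exact intervalIntegral.integral_hasDerivAt_right
      ((hlam.mono (hsub s hs)).intervalIntegrable)
      (hlam.stronglyMeasurableAtFilter hJo s hs)
      ((hlam s hs).continuousAt (hJo.mem_nhds hs))
  have hGcont : ContinuousOn G J := fun s hs =>
    ((hGderiv s hs).continuousAt).continuousWithinAt
  -- continuity of the integrand h
  set h : ℝ → ℝ := fun ζ => (ν ⬝ᵥ f ζ) * Real.exp (-(G ζ)) with hhdef
  have hdot : ContinuousOn (fun ζ => ν ⬝ᵥ f ζ) J := by
    simp only [dotProduct]
    exact continuousOn_finset_sum _ fun i _ =>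
      continuousOn_const.mul ((continuous_apply i).comp_continuousOn hf)
  have hhcont : ContinuousOn h J :=
    hdot.mul ((Real.continuous_exp.comp_continuousOn hGcont.neg))
  -- derivative of the time part
  have hd1 : HasDerivAt (fun s => (ν ⬝ᵥ x) * Real.exp (-(G s)))
      ((ν ⬝ᵥ x) * (Real.exp (-(G t)) * (-(lam t)))) t := by
    exact ((hGderiv t ht).neg.exp).const_mul _
  have hd2 : HasDerivAt (fun s => ∫ ζ in t₀..s, h ζ) (h t) t :=
    intervalIntegral.integral_hasDerivAt_right
      ((hhcont.mono (hsub t ht)).intervalIntegrable)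
      (hhcont.stronglyMeasurableAtFilter hJo t ht)
      ((hhcont t ht).continuousAt (hJo.mem_nhds ht))
  have hD : deriv (fun s => (ν ⬝ᵥ x) * Real.exp (-(G s)) - ∫ ζ in t₀..s, h ζ) t
      = (ν ⬝ᵥ x) * (Real.exp (-(G t)) * (-(lam t))) - h t := (hd1.sub hd2).deriv
  -- fderiv
  set c : ℝ := Real.exp (-(G t)) with hcdef
  set K : ℝ := ∫ ζ in t₀..t, h ζ with hKdef
  set L : (Fin n → ℝ) →L[ℝ] ℝ :=
    ∑ i, ν i • (ContinuousLinearMap.proj i : (Fin n → ℝ) →L[ℝ] ℝ) with hLdef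
  have hLapp : ∀ v : Fin n → ℝ, L v = ν ⬝ᵥ v := by
    intro v
    simp [hLdef, ContinuousLinearMap.sum_apply, dotProduct]
  have hdotF : HasFDerivAt (fun y : Fin n → ℝ => ν ⬝ᵥ y) L x := by
    have : (fun y : Fin n → ℝ => ν ⬝ᵥ y) = fun y => L y := by
      funext y; rw [hLapp]
    rw [this]
    exact L.hasFDerivAt
  have hF : HasFDerivAt (fun y : Fin n → ℝ => (ν ⬝ᵥ y) * c - K) (c • L) x :=
    (hdotF.mul_const c).sub_const K
  have hfd : fderiv ℝ (fun y : Fin n → ℝ => (ν ⬝ᵥ y) * c - K) x ((A t).mulVec x + f t)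
      = c * (ν ⬝ᵥ ((A t).mulVec x + f t)) := by
    rw [hF.fderiv]
    simp [hLapp]
  -- eigen identity
  have hAx : ν ⬝ᵥ (A t).mulVec x = lam t * (ν ⬝ᵥ x) := by
    rw [dotProduct_mulVec, ← mulVec_transpose, heig t ht, smul_dotProduct]
    rfl
  -- assemble
  show deriv (fun s => (ν ⬝ᵥ x) * Real.exp (-(G s)) - ∫ ζ in t₀..s, h ζ) t
      + fderiv ℝ (fun y : Fin n → ℝ => (ν ⬝ᵥ y) * c - K) x ((A t).mulVec x + f t) = 0
  rw [hD, hfd, dotProduct_add, hAx]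
  show (ν ⬝ᵥ x) * (c * -lam t) - (ν ⬝ᵥ f t) * Real.exp (-(G t))
      + c * (lam t * (ν ⬝ᵥ x) + ν ⬝ᵥ f t) = 0
  rw [hcdef]
  ring
end
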